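/- Fix r ≤ −1, ρ ∈ [0,1], α > 0, c > 0 and γ ∈ (0,1) with √c > 1 − √(γ(1−ρ)). Set μ_m = √(2c·log m) and π_m = m^{γ−1}. For each m, let Z_0, Z_1, …, Z_m be i.i.d. standard normal, let B_{m1}, …, B_{mm} be i.i.d. Bernoulli(π_m) independent of the Z's, and set p_{mi} = Φ(−μ_m·B_{mi} − √ρ·Z_0 − √(1−ρ)·Z_i). Let the rejection threshold be c_m = α·m^{1/|r| − 1} if r < −1 and c_m = α/(1 + α·log m) if r = −1. Then lim_{m→∞} Pr( ((1/m) Σ_{i=1}^m p_{mi}^r)^{1/r} ≤ c_m ) = 1. -/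

import Mathlib

set_option maxHeartbeats 1000000


open MeasureTheory ProbabilityTheory Filter

/-- Standard normal CDF `Φ`. -/
noncomputable def Phi (x : ℝ) : ℝ := ((gaussianReal 0 1 : Measure ℝ) (Set.Iic x)).toReal

/-- Bernoulli(π) law on `ℝ` (mass `π` at `1`, mass `1-π` at `0`). -/
noncomputable def bern (p : ℝ) : Measure ℝ :=
  ENNReal.ofReal p • Measure.dirac (1:ℝ) + ENNReal.ofReal (1 - p) • Measure.dirac (0:ℝ)

/-- Joint law at stage `m` of the equicorrelated Gaussian model: `m+1` i.i.d. standard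
normals `Z₀,…,Z_m` together with `m` i.i.d. Bernoulli(π) signal indicators. -/
noncomputable def model (m : ℕ) (πp : ℝ) :
    Measure ((Fin (m + 1) → ℝ) × (Fin m → ℝ)) :=
  (Measure.pi fun _ : Fin (m + 1) => (gaussianReal 0 1 : Measure ℝ)).prod
    (Measure.pi fun _ : Fin m => bern πp)

/-- The p-value `p_{mi} = Φ(-μ B_{mi} - √ρ Z₀ - √(1-ρ) Z_i)`. -/
noncomputable def pval (m : ℕ) (μs ρ : ℝ)
    (ω : (Fin (m + 1) → ℝ) × (Fin m → ℝ)) (i : Fin m) : ℝ :=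
  Phi (-(μs * ω.2 i) - Real.sqrt ρ * ω.1 0 - Real.sqrt (1 - ρ) * ω.1 i.succ)

/-- Asymptotic calibration `c_m` of the generalized-mean test of level `α` for
`r ≤ -1`: `c_m = α/(1 + α log m)` if `r = -1` and `c_m = α m^{1/|r| - 1}` if `r < -1`. -/
noncomputable def cal (r α : ℝ) (m : ℕ) : ℝ :=
  if r = -1 then α / (1 + α * Real.log m) else α * (m : ℝ) ^ (1 / |r| - 1)

open Real Set
open scoped ENNReal

section Aux

lemma gpdf_eq (x : ℝ) : gaussianPDF 0 1 x
    = ENNReal.ofReal ((Real.sqrt (2*π))⁻¹ * Real.exp (-x^2/2)) := by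
  simp [gaussianPDF, gaussianPDFReal]

lemma gauss_Iic_le {w : ℝ} (hw : 0 ≤ w) :
    (gaussianReal 0 1 : Measure ℝ) (Set.Iic (-w)) ≤ ENNReal.ofReal (Real.exp (-w^2/2)) := by
  rw [gaussianReal_apply 0 one_ne_zero]
  have hmeas : Measurable fun x : ℝ => ENNReal.ofReal (Real.exp (-w^2/2)) * gaussianPDF 0 1 (x + w) :=
    ((measurable_gaussianPDF 0 1).comp (measurable_add_const w)).const_mul _
  have hpt : ∀ x ∈ Set.Iic (-w),
      gaussianPDF 0 1 x ≤ ENNReal.ofReal (Real.exp (-w^2/2)) * gaussianPDF 0 1 (x + w) := by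
    intro x hx
    simp only [Set.mem_Iic] at hx
    rw [gpdf_eq, gpdf_eq, ← ENNReal.ofReal_mul (Real.exp_nonneg _)]
    refine ENNReal.ofReal_le_ofReal ?_
    rw [show Real.exp (-w^2/2) * ((Real.sqrt (2*π))⁻¹ * Real.exp (-(x+w)^2/2))
        = (Real.sqrt (2*π))⁻¹ * (Real.exp (-w^2/2) * Real.exp (-(x+w)^2/2)) by ring,
      ← Real.exp_add]
    refine mul_le_mul_of_nonneg_left ?_ (by positivity)
    refine Real.exp_le_exp.2 ?_
    nlinarith [mul_nonpos_of_nonneg_of_nonpos hw (by linarith : x + w ≤ 0)]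
  calc ∫⁻ x in Set.Iic (-w), gaussianPDF 0 1 x
      ≤ ∫⁻ x in Set.Iic (-w), ENNReal.ofReal (Real.exp (-w^2/2)) * gaussianPDF 0 1 (x + w) :=
        setLIntegral_mono hmeas hpt
    _ ≤ ∫⁻ x, ENNReal.ofReal (Real.exp (-w^2/2)) * gaussianPDF 0 1 (x + w) :=
        setLIntegral_le_lintegral _ _
    _ = ENNReal.ofReal (Real.exp (-w^2/2)) * ∫⁻ x, gaussianPDF 0 1 (x + w) :=
        lintegral_const_mul _ ((measurable_gaussianPDF 0 1).comp (measurable_add_const w))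
    _ = ENNReal.ofReal (Real.exp (-w^2/2)) * 1 := by
        rw [lintegral_add_right_eq_self (gaussianPDF 0 1) w,
          lintegral_gaussianPDF_eq_one 0 one_ne_zero]
    _ = _ := mul_one _

lemma gauss_Ici_ge {u : ℝ} (hu : 0 ≤ u) :
    ENNReal.ofReal ((Real.sqrt (2*π))⁻¹ * Real.exp (-(u+1)^2/2))
      ≤ (gaussianReal 0 1 : Measure ℝ) (Set.Ici u) := by
  rw [gaussianReal_apply 0 one_ne_zero]
  calc ENNReal.ofReal ((Real.sqrt (2*π))⁻¹ * Real.exp (-(u+1)^2/2))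
      = ∫⁻ _ in Set.Icc u (u+1), ENNReal.ofReal ((Real.sqrt (2*π))⁻¹ * Real.exp (-(u+1)^2/2)) := by
        rw [setLIntegral_const, Real.volume_Icc]
        norm_num
    _ ≤ ∫⁻ x in Set.Icc u (u+1), gaussianPDF 0 1 x := by
        refine setLIntegral_mono (measurable_gaussianPDF 0 1) ?_
        intro x hx
        rw [gpdf_eq]
        refine ENNReal.ofReal_le_ofReal ?_
        refine mul_le_mul_of_nonneg_left ?_ (by positivity)
        refine Real.exp_le_exp.2 ?_
        obtain ⟨h1, h2⟩ := hx
        nlinarith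
    _ ≤ ∫⁻ x in Set.Ici u, gaussianPDF 0 1 x :=
        lintegral_mono_set (Set.Icc_subset_Ici_self)

lemma Phi_nonneg (x : ℝ) : 0 ≤ Phi x := ENNReal.toReal_nonneg

lemma gauss_Iic_ne_top (x : ℝ) : (gaussianReal 0 1 : Measure ℝ) (Set.Iic x) ≠ ⊤ :=
  (measure_lt_top _ _).ne

lemma Phi_mono : Monotone Phi := by
  intro a b hab
  exact ENNReal.toReal_mono (gauss_Iic_ne_top b) (measure_mono (Set.Iic_subset_Iic.2 hab))

lemma Phi_le_one (x : ℝ) : Phi x ≤ 1 := by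
  have := measure_mono (Set.subset_univ (Set.Iic x)) (μ := (gaussianReal 0 1 : Measure ℝ))
  rw [measure_univ] at this
  simpa [Phi] using ENNReal.toReal_mono (by simp) this

lemma Phi_pos (x : ℝ) : 0 < Phi x := by
  set M := max |x - 1| |x| with hM
  have hle : ENNReal.ofReal ((Real.sqrt (2*π))⁻¹ * Real.exp (-M^2/2))
      ≤ (gaussianReal 0 1 : Measure ℝ) (Set.Iic x) := by
    rw [gaussianReal_apply 0 one_ne_zero]
    calc ENNReal.ofReal ((Real.sqrt (2*π))⁻¹ * Real.exp (-M^2/2))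
        = ∫⁻ _ in Set.Icc (x-1) x, ENNReal.ofReal ((Real.sqrt (2*π))⁻¹ * Real.exp (-M^2/2)) := by
          rw [setLIntegral_const, Real.volume_Icc]
          norm_num
      _ ≤ ∫⁻ y in Set.Icc (x-1) x, gaussianPDF 0 1 y := by
          refine setLIntegral_mono (measurable_gaussianPDF 0 1) ?_
          intro y hy
          rw [gpdf_eq]
          refine ENNReal.ofReal_le_ofReal (mul_le_mul_of_nonneg_left (Real.exp_le_exp.2 ?_)
            (by positivity))
          obtain ⟨h1, h2⟩ := hy
          have hy2 : y^2 ≤ M^2 := by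
            have hA : -M ≤ x - 1 := by
              have h5 := neg_abs_le (x-1)
              have h6 := le_max_left |x-1| |x|
              rw [hM]; linarith
            have h3 : -M ≤ y := le_trans hA h1
            have h4 : y ≤ M := le_trans h2 (le_trans (le_abs_self x) (le_max_right _ _))
            nlinarith
          linarith
      _ ≤ ∫⁻ y in Set.Iic x, gaussianPDF 0 1 y := by
          refine lintegral_mono_set ?_
          intro y hy; exact hy.2
  have hpos : (0:ℝ≥0∞) < ENNReal.ofReal ((Real.sqrt (2*π))⁻¹ * Real.exp (-M^2/2)) := by
    rw [ENNReal.ofReal_pos]; positivity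
  exact ENNReal.toReal_pos (lt_of_lt_of_le hpos hle).ne' (gauss_Iic_ne_top x)

lemma gauss_Iic_eq_ofReal (x : ℝ) :
    (gaussianReal 0 1 : Measure ℝ) (Set.Iic x) = ENNReal.ofReal (Phi x) := by
  rw [Phi, ENNReal.ofReal_toReal (gauss_Iic_ne_top x)]

lemma Phi_le_exp {w : ℝ} (hw : 0 ≤ w) : Phi (-w) ≤ Real.exp (-w^2/2) := by
  have := gauss_Iic_le hw
  rw [gauss_Iic_eq_ofReal] at this
  exact (ENNReal.ofReal_le_ofReal_iff (Real.exp_nonneg _)).1 this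

lemma bern_apply_one (p : ℝ) : bern p {1} = ENNReal.ofReal p := by
  simp [bern, Measure.dirac_apply' _ (measurableSet_singleton (1:ℝ)),
    Measure.dirac_apply' _ (measurableSet_singleton (1:ℝ))]

lemma bern_prob {p : ℝ} (h0 : 0 ≤ p) (h1 : p ≤ 1) : IsProbabilityMeasure (bern p) := by
  constructor
  simp only [bern, Measure.add_apply, Measure.smul_apply, measure_univ, smul_eq_mul, mul_one]
  rw [← ENNReal.ofReal_add h0 (by linarith)]
  norm_num

/-- The measurable equivalence underlying the model. -/
noncomputable def modelEquiv (m : ℕ) :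
    (ℝ × (Fin m → ℝ × ℝ)) ≃ᵐ ((Fin (m + 1) → ℝ) × (Fin m → ℝ)) :=
  ((MeasurableEquiv.refl ℝ).prodCongr (MeasurableEquiv.arrowProdEquivProdArrow ℝ ℝ (Fin m))).trans
    ((MeasurableEquiv.prodAssoc.symm).trans
      (((MeasurableEquiv.piFinSuccAbove (fun _ : Fin (m+1) => ℝ) 0).symm).prodCongr
        (MeasurableEquiv.refl (Fin m → ℝ))))

lemma modelEquiv_mp (m : ℕ) {p : ℝ} (h0 : 0 ≤ p) (h1 : p ≤ 1) :
    MeasurePreserving (modelEquiv m)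
      ((gaussianReal 0 1 : Measure ℝ).prod
        (Measure.pi fun _ : Fin m => (gaussianReal 0 1 : Measure ℝ).prod (bern p)))
      (model m p) := by
  haveI : IsProbabilityMeasure (bern p) := bern_prob h0 h1
  have h₁ : MeasurePreserving
      (⇑((MeasurableEquiv.refl ℝ).prodCongr (MeasurableEquiv.arrowProdEquivProdArrow ℝ ℝ (Fin m))))
      ((gaussianReal 0 1 : Measure ℝ).prod
        (Measure.pi fun _ : Fin m => (gaussianReal 0 1 : Measure ℝ).prod (bern p)))
      ((gaussianReal 0 1 : Measure ℝ).prod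
        ((Measure.pi fun _ : Fin m => (gaussianReal 0 1 : Measure ℝ)).prod
          (Measure.pi fun _ : Fin m => bern p))) :=
    (MeasurePreserving.id _).prod
      (measurePreserving_arrowProdEquivProdArrow ℝ ℝ (Fin m) _ _)
  have h₂ : MeasurePreserving (⇑(MeasurableEquiv.prodAssoc.symm
      : (ℝ × ((Fin m → ℝ) × (Fin m → ℝ))) ≃ᵐ ((ℝ × (Fin m → ℝ)) × (Fin m → ℝ))))
      ((gaussianReal 0 1 : Measure ℝ).prod
        ((Measure.pi fun _ : Fin m => (gaussianReal 0 1 : Measure ℝ)).prod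
          (Measure.pi fun _ : Fin m => bern p)))
      (((gaussianReal 0 1 : Measure ℝ).prod
        (Measure.pi fun _ : Fin m => (gaussianReal 0 1 : Measure ℝ))).prod
          (Measure.pi fun _ : Fin m => bern p)) :=
    (measurePreserving_prodAssoc _ _ _).symm _
  have h₃ : MeasurePreserving
      (⇑(((MeasurableEquiv.piFinSuccAbove (fun _ : Fin (m+1) => ℝ) 0).symm).prodCongr
        (MeasurableEquiv.refl (Fin m → ℝ))))
      (((gaussianReal 0 1 : Measure ℝ).prod
        (Measure.pi fun _ : Fin m => (gaussianReal 0 1 : Measure ℝ))).prod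
          (Measure.pi fun _ : Fin m => bern p))
      (model m p) :=
    ((measurePreserving_piFinSuccAbove (fun _ : Fin (m+1) => (gaussianReal 0 1 : Measure ℝ))
      0).symm _).prod (MeasurePreserving.id _)
  exact (h₃.comp h₂).comp h₁

lemma model_bad1 (m : ℕ) {p : ℝ} (h0 : 0 ≤ p) (h1 : p ≤ 1) (v : ℝ) :
    model m p {ω : (Fin (m + 1) → ℝ) × (Fin m → ℝ) | ω.1 0 < v}
      = (gaussianReal 0 1 : Measure ℝ) (Set.Iio v) := by
  haveI : IsProbabilityMeasure (bern p) := bern_prob h0 h1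
  have hmp := modelEquiv_mp m h0 h1
  have hemb := (modelEquiv m).measurableEmbedding
  rw [← hmp.measure_preimage_emb hemb]
  have hpre : (modelEquiv m) ⁻¹' {ω : (Fin (m + 1) → ℝ) × (Fin m → ℝ) | ω.1 0 < v}
      = Set.Iio v ×ˢ Set.univ := by
    ext ⟨x, y⟩
    simp [modelEquiv, MeasurableEquiv.prodAssoc, MeasurableEquiv.arrowProdEquivProdArrow,
      Equiv.arrowProdEquivProdArrow, MeasurableEquiv.piFinSuccAbove,
      MeasurableEquiv.prodCongr, MeasurableEquiv.refl, Fin.consEquiv, Fin.cons_zero,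
      Fin.cons_succ, MeasurableEquiv.coe_mk, Equiv.coe_fn_mk, Equiv.prodCongr]
  rw [hpre, Measure.prod_prod, measure_univ, mul_one]

lemma model_bad2 (m : ℕ) {p : ℝ} (h0 : 0 ≤ p) (h1 : p ≤ 1) (u : ℝ) :
    model m p {ω : (Fin (m + 1) → ℝ) × (Fin m → ℝ) | ∀ i : Fin m, ¬(ω.2 i = 1 ∧ u ≤ ω.1 i.succ)}
      = (1 - (gaussianReal 0 1 : Measure ℝ) (Set.Ici u) * ENNReal.ofReal p) ^ m := by
  haveI : IsProbabilityMeasure (bern p) := bern_prob h0 h1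
  have hmp := modelEquiv_mp m h0 h1
  have hemb := (modelEquiv m).measurableEmbedding
  rw [← hmp.measure_preimage_emb hemb]
  have hpre : (modelEquiv m) ⁻¹'
      {ω : (Fin (m + 1) → ℝ) × (Fin m → ℝ) | ∀ i : Fin m, ¬(ω.2 i = 1 ∧ u ≤ ω.1 i.succ)}
      = Set.univ ×ˢ Set.pi Set.univ (fun _ : Fin m => (Set.Ici u ×ˢ ({1} : Set ℝ))ᶜ) := by
    ext ⟨x, y⟩
    simp [modelEquiv, MeasurableEquiv.prodAssoc, MeasurableEquiv.arrowProdEquivProdArrow,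
      Equiv.arrowProdEquivProdArrow, MeasurableEquiv.piFinSuccAbove,
      MeasurableEquiv.prodCongr, MeasurableEquiv.refl, Fin.consEquiv, Fin.cons_zero,
      Fin.cons_succ, MeasurableEquiv.coe_mk, Equiv.coe_fn_mk, Equiv.prodCongr, not_and, and_comm]
  rw [hpre, Measure.prod_prod, measure_univ, one_mul, Measure.pi_pi]
  have hν : ((gaussianReal 0 1 : Measure ℝ).prod (bern p)) ((Set.Ici u ×ˢ ({1} : Set ℝ))ᶜ)
      = 1 - (gaussianReal 0 1 : Measure ℝ) (Set.Ici u) * ENNReal.ofReal p := by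
    haveI : IsProbabilityMeasure ((gaussianReal 0 1 : Measure ℝ).prod (bern p)) := by
      infer_instance
    rw [measure_compl (measurableSet_Ici.prod (measurableSet_singleton 1)) (measure_ne_top _ _),
      measure_univ, Measure.prod_prod, bern_apply_one]
  rw [hν, Finset.prod_const, Finset.card_univ, Fintype.card_fin]

lemma det_lemma (r α : ℝ) (hr : r ≤ -1) (hα : 0 < α) (m : ℕ) (hm : 1 ≤ m)
    (μs ρ u v : ℝ) (hu : 0 ≤ u)
    (hT : Phi (-(μs - Real.sqrt ρ * v + Real.sqrt (1-ρ) * u)) ≤ α / (m * (1 + α * Real.log m)))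
    (ω : (Fin (m + 1) → ℝ) × (Fin m → ℝ)) (hω1 : -v ≤ ω.1 0)
    (hω2 : ∃ i : Fin m, ω.2 i = 1 ∧ u ≤ ω.1 i.succ) :
    ((1 / m : ℝ) * ∑ i : Fin m, pval m μs ρ ω i ^ r) ^ (1 / r) ≤ cal r α m := by
  have hm1 : (1:ℝ) ≤ (m:ℝ) := by exact_mod_cast hm
  have hm0 : (0:ℝ) < m := by linarith
  have hlog : 0 ≤ Real.log m := Real.log_nonneg hm1
  have hL1 : (1:ℝ) ≤ 1 + α * Real.log m := by nlinarith
  have hL0 : (0:ℝ) < 1 + α * Real.log m := by linarith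
  set T : ℝ := α / (m * (1 + α * Real.log m)) with hTdef
  have hT0 : 0 < T := by positivity
  have hrneg : r < 0 := lt_of_le_of_lt hr (by norm_num)
  have hrne : r ≠ 0 := ne_of_lt hrneg
  obtain ⟨i, hBi, hZi⟩ := hω2
  set w : ℝ := μs - Real.sqrt ρ * v + Real.sqrt (1-ρ) * u with hw
  -- the selected p-value is at most T
  have hpT : pval m μs ρ ω i ≤ T := by
    refine le_trans ?_ hT
    refine Phi_mono ?_
    have h1 : Real.sqrt ρ * (-v) ≤ Real.sqrt ρ * ω.1 0 :=
      mul_le_mul_of_nonneg_left hω1 (Real.sqrt_nonneg _)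
    have h2 : Real.sqrt (1-ρ) * u ≤ Real.sqrt (1-ρ) * ω.1 i.succ :=
      mul_le_mul_of_nonneg_left hZi (Real.sqrt_nonneg _)
    rw [hBi, mul_one]
    simp only [hw]
    linarith
  have hppos : 0 < pval m μs ρ ω i := Phi_pos _
  have hTr : T ^ r ≤ pval m μs ρ ω i ^ r :=
    Real.rpow_le_rpow_of_nonpos hppos hpT (le_of_lt hrneg)
  have hsum : pval m μs ρ ω i ^ r ≤ ∑ j : Fin m, pval m μs ρ ω j ^ r :=
    Finset.single_le_sum (f := fun j : Fin m => pval m μs ρ ω j ^ r)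
      (fun j _ => Real.rpow_nonneg (Phi_nonneg _) r) (Finset.mem_univ i)
  -- key : m * cal^r ≤ T^r
  have hcal0 : 0 < cal r α m := by
    rw [cal]
    split_ifs
    · positivity
    · have := Real.rpow_pos_of_pos hm0 (1 / |r| - 1)
      positivity
  have hkey : (m:ℝ) * cal r α m ^ r ≤ T ^ r := by
    rcases eq_or_lt_of_le hr with heq | hlt
    · -- r = -1
      rw [cal, if_pos heq, heq]
      have e1 : ∀ x : ℝ, 0 < x → x ^ (-1 : ℝ) = x⁻¹ := by
        intro x hx
        rw [show (-1 : ℝ) = ((-1 : ℤ) : ℝ) by norm_num, Real.rpow_intCast, zpow_neg_one]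
      rw [e1 _ (by positivity), e1 _ hT0]
      rw [hTdef]
      field_simp
      exact le_rfl
    · -- r < -1
      have hne : r ≠ -1 := ne_of_lt hlt
      rw [cal, if_neg hne, abs_of_neg hrneg]
      have hx0 : (0:ℝ) < (m:ℝ) * (1 + α * Real.log m) := by positivity
      have hTr' : T ^ r = α ^ r * ((m:ℝ) * (1 + α * Real.log m)) ^ (-r) := by
        rw [hTdef, div_eq_mul_inv, Real.mul_rpow hα.le (by positivity),
          Real.inv_rpow hx0.le, ← Real.rpow_neg hx0.le]
      have hcalr : (α * (m:ℝ) ^ (1 / (-r) - 1)) ^ r = α ^ r * (m:ℝ) ^ ((1 / (-r) - 1) * r) := by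
        rw [Real.mul_rpow hα.le (Real.rpow_nonneg hm0.le _), ← Real.rpow_mul hm0.le]
      have hexp : (1 / (-r) - 1) * r = -1 - r := by
        rw [sub_mul, mul_comm (1 / (-r)) r, mul_one_div, div_neg, div_self hrne]
        ring
      rw [hTr', hcalr, hexp]
      have hmono : (m:ℝ) ^ (-r) ≤ ((m:ℝ) * (1 + α * Real.log m)) ^ (-r) :=
        Real.rpow_le_rpow hm0.le (by nlinarith) (by linarith)
      calc (m:ℝ) * (α ^ r * (m:ℝ) ^ (-1 - r))
          = α ^ r * ((m:ℝ) ^ (1:ℝ) * (m:ℝ) ^ (-1 - r)) := by rw [Real.rpow_one]; ring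
        _ = α ^ r * (m:ℝ) ^ (-r) := by
            rw [← Real.rpow_add hm0, show (1:ℝ) + (-1 - r) = -r by ring]
        _ ≤ α ^ r * ((m:ℝ) * (1 + α * Real.log m)) ^ (-r) :=
            mul_le_mul_of_nonneg_left hmono (Real.rpow_nonneg hα.le r)
  -- assemble
  have hS : cal r α m ^ r ≤ (1 / m : ℝ) * ∑ j : Fin m, pval m μs ρ ω j ^ r := by
    rw [div_mul_eq_mul_div, one_mul, le_div_iff₀ hm0, mul_comm]
    calc (m:ℝ) * cal r α m ^ r ≤ T ^ r := hkey
      _ ≤ pval m μs ρ ω i ^ r := hTr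
      _ ≤ ∑ j : Fin m, pval m μs ρ ω j ^ r := hsum
  have hcalr0 : 0 < cal r α m ^ r := Real.rpow_pos_of_pos hcal0 r
  calc ((1 / m : ℝ) * ∑ j : Fin m, pval m μs ρ ω j ^ r) ^ (1 / r)
      ≤ (cal r α m ^ r) ^ (1 / r) :=
        Real.rpow_le_rpow_of_nonpos hcalr0 hS (by
          rw [div_nonpos_iff]; left; exact ⟨zero_le_one, hrneg.le⟩)
    _ = cal r α m := by
        rw [← Real.rpow_mul hcal0.le, mul_one_div_cancel hrne, Real.rpow_one]

lemma lim1 (α d : ℝ) (hd : 0 < d) :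
    Tendsto (fun x : ℝ => (1 + α*x) * Real.exp (-(d*x))) atTop (nhds 0) := by
  have hdx : Tendsto (fun x : ℝ => d * x) atTop atTop :=
    Tendsto.const_mul_atTop hd tendsto_id
  have h1 : Tendsto (fun x : ℝ => Real.exp (-(d*x))) atTop (nhds 0) :=
    Real.tendsto_exp_neg_atTop_nhds_zero.comp hdx
  have h2 : Tendsto (fun x : ℝ => (d*x) * Real.exp (-(d*x))) atTop (nhds 0) := by
    have := (Real.tendsto_pow_mul_exp_neg_atTop_nhds_zero 1).comp hdx
    simpa [Function.comp_def] using this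
  have h3 : Tendsto (fun x : ℝ => Real.exp (-(d*x)) + (α/d) * ((d*x) * Real.exp (-(d*x))))
      atTop (nhds 0) := by
    have := h1.add (h2.const_mul (α/d))
    simpa using this
  refine h3.congr fun x => ?_
  field_simp

lemma lim2 (a b : ℝ) (ha : 0 < a) (hb : 0 ≤ b) :
    Tendsto (fun x : ℝ => a*x - b*Real.sqrt x - 1/2) atTop atTop := by
  have hbase : Tendsto (fun x : ℝ => a/2 * x - 1/2) atTop atTop :=
    tendsto_atTop_add_const_right _ _ (Tendsto.const_mul_atTop (by positivity) tendsto_id)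
  refine tendsto_atTop_mono' atTop ?_ hbase
  filter_upwards [eventually_ge_atTop ((2*b/a)^2), eventually_ge_atTop (0:ℝ)] with x hx hx0
  have hsx : 2*b/a ≤ Real.sqrt x := (Real.le_sqrt (by positivity) hx0).2 hx
  have hxx : Real.sqrt x ^ 2 = x := Real.sq_sqrt hx0
  have h2b : 2*b ≤ a * Real.sqrt x := by
    calc 2*b = a * (2*b/a) := by field_simp
      _ ≤ a * Real.sqrt x := mul_le_mul_of_nonneg_left hsx ha.le
  nlinarith [Real.sqrt_nonneg x]

end Aux

/-- for `r ≤ -1`, `ρ ∈ [0,1]`, strong sparse signals `μ_m = √(2c log m)`,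
`π_m = m^{γ-1}` with `γ ∈ (0,1)` and `√c > 1 - √(γ(1-ρ))` (above the detection
boundary), the asymptotic power of the calibrated generalized-mean test is one. -/
theorem stmt_17 (r ρ α c γ : ℝ) (hr : r ≤ -1) (hρ : ρ ∈ Set.Icc (0:ℝ) 1) (hα : 0 < α)
    (hc : 0 < c) (hγ : γ ∈ Set.Ioo (0:ℝ) 1)
    (hdet : 1 - Real.sqrt (γ * (1 - ρ)) < Real.sqrt c) :
    Tendsto (fun m : ℕ =>
        model m ((m : ℝ) ^ (γ - 1)) {ω | ((1 / m : ℝ) * ∑ i : Fin m,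
            pval m (Real.sqrt (2 * c * Real.log m)) ρ ω i ^ r) ^ (1 / r) ≤ cal r α m})
      atTop (nhds (1 : ENNReal)) := by
  obtain ⟨hρ0, hρ1⟩ := hρ
  obtain ⟨hγ0, hγ1⟩ := hγ
  -- constants
  set s : ℝ := Real.sqrt c + Real.sqrt (γ*(1-ρ)) - 1 with hs_def
  have hs : 0 < s := by simp only [hs_def]; linarith
  set ε : ℝ := min (s/3) 1 with hε_def
  have hε0 : 0 < ε := lt_min (by linarith) one_pos
  have hε3 : ε ≤ s/3 := min_le_left _ _
  set η : ℝ := min (s/3) (1/2) with hη_def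
  have hη0 : 0 < η := lt_min (by linarith) (by norm_num)
  have hη3 : η ≤ s/3 := min_le_left _ _
  have hη2 : η ≤ 1/2 := min_le_right _ _
  set γ' : ℝ := γ * (1-η)^2 with hγ'_def
  have h1η : 0 < 1 - η := by linarith
  have hγ'0 : 0 < γ' := mul_pos hγ0 (pow_pos h1η 2)
  have hγ'γ : γ' < γ := by
    rw [hγ'_def]
    nlinarith [mul_pos (mul_pos hγ0 hη0) (show (0:ℝ) < 2 - η by linarith)]
  have hργ1 : Real.sqrt (γ*(1-ρ)) ≤ 1 := by
    have h := Real.sqrt_le_sqrt (show γ*(1-ρ) ≤ 1 by nlinarith)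
    rwa [Real.sqrt_one] at h
  have hsqρ1 : Real.sqrt ρ ≤ 1 := by
    have h := Real.sqrt_le_sqrt hρ1
    rwa [Real.sqrt_one] at h
  have hsq : Real.sqrt ((1-ρ)*γ') = (1-η) * Real.sqrt (γ*(1-ρ)) := by
    rw [show (1-ρ)*γ' = (1-η)^2 * (γ*(1-ρ)) by rw [hγ'_def]; ring,
      Real.sqrt_mul (by positivity), Real.sqrt_sq h1η.le]
  set δ : ℝ := Real.sqrt c + Real.sqrt ((1-ρ)*γ') - ε * Real.sqrt ρ with hδ_def
  have hδ1 : 1 + s/3 ≤ δ := by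
    have hγρ0 : 0 ≤ Real.sqrt (γ*(1-ρ)) := Real.sqrt_nonneg _
    have h1 : η * Real.sqrt (γ*(1-ρ)) ≤ η := by nlinarith
    have h2 : ε * Real.sqrt ρ ≤ ε := by nlinarith [Real.sqrt_nonneg ρ]
    have h3 : (1-η) * Real.sqrt (γ*(1-ρ))
        = Real.sqrt (γ*(1-ρ)) - η * Real.sqrt (γ*(1-ρ)) := by ring
    have hε3' : ε ≤ s/3 := hε3
    rw [hδ_def, hsq]
    linarith
  have hδpos : 0 < δ := by linarith
  have hδ2 : 1 < δ^2 := by nlinarith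
  -- π bounds
  have hπ0 : ∀ m : ℕ, 0 ≤ (m:ℝ) ^ (γ-1) := fun m => Real.rpow_nonneg (Nat.cast_nonneg m) _
  have hπ1 : ∀ m : ℕ, 1 ≤ m → (m:ℝ) ^ (γ-1) ≤ 1 := fun m hm =>
    Real.rpow_le_one_of_one_le_of_nonpos (by exact_mod_cast hm) (by linarith)
  have hLtends : Tendsto (fun m : ℕ => Real.log m) atTop atTop :=
    Real.tendsto_log_atTop.comp tendsto_natCast_atTop_atTop
  -- bad event 1 tends to zero
  have hb1 : Tendsto (fun m : ℕ => model m ((m:ℝ)^(γ-1))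
      {ω : (Fin (m + 1) → ℝ) × (Fin m → ℝ) | ω.1 0 < -(ε * Real.sqrt (2*Real.log m))})
      atTop (nhds 0) := by
    have hub : Tendsto (fun m : ℕ => ENNReal.ofReal (Real.exp (-(ε^2 * Real.log m))))
        atTop (nhds 0) := by
      have h := ENNReal.tendsto_ofReal (a := 0)
        (Real.tendsto_exp_neg_atTop_nhds_zero.comp
          (Tendsto.const_mul_atTop (by positivity : (0:ℝ) < ε^2) hLtends))
      simpa using h
    refine tendsto_of_tendsto_of_tendsto_of_le_of_le' tendsto_const_nhds hub
      (Eventually.of_forall fun m => zero_le) ?_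
    filter_upwards [eventually_ge_atTop 1] with m hm
    have hL0 : 0 ≤ Real.log m := Real.log_nonneg (by exact_mod_cast hm)
    rw [model_bad1 m (hπ0 m) (hπ1 m hm)]
    have hv0 : 0 ≤ ε * Real.sqrt (2*Real.log m) := by positivity
    calc (gaussianReal 0 1 : Measure ℝ) (Set.Iio (-(ε * Real.sqrt (2*Real.log m))))
        ≤ (gaussianReal 0 1 : Measure ℝ) (Set.Iic (-(ε * Real.sqrt (2*Real.log m)))) :=
          measure_mono Set.Iio_subset_Iic_self
      _ ≤ ENNReal.ofReal (Real.exp (-(ε * Real.sqrt (2*Real.log m))^2/2)) := gauss_Iic_le hv0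
      _ = ENNReal.ofReal (Real.exp (-(ε^2 * Real.log m))) := by
          rw [mul_pow, Real.sq_sqrt (by linarith)]
          ring_nf
  -- bad event 2 tends to zero
  have hb2 : Tendsto (fun m : ℕ => model m ((m:ℝ)^(γ-1))
      {ω : (Fin (m + 1) → ℝ) × (Fin m → ℝ) | ∀ i : Fin m,
        ¬(ω.2 i = 1 ∧ Real.sqrt (2*γ'*Real.log m) ≤ ω.1 i.succ)})
      atTop (nhds 0) := by
    set qr : ℕ → ℝ := fun m =>
      ((gaussianReal 0 1 : Measure ℝ) (Set.Ici (Real.sqrt (2*γ'*Real.log m)))).toReal with hqr_def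
    have hqr0 : ∀ m, 0 ≤ qr m := fun m => ENNReal.toReal_nonneg
    have hqr1 : ∀ m, qr m ≤ 1 := fun m => by
      have := measure_mono (Set.subset_univ (Set.Ici (Real.sqrt (2*γ'*Real.log m))))
        (μ := (gaussianReal 0 1 : Measure ℝ))
      rw [measure_univ] at this
      simpa [hqr_def] using ENNReal.toReal_mono (by simp) this
    -- the product m * π * qr tends to infinity
    have hmain : Tendsto (fun m : ℕ => (m:ℝ) * ((m:ℝ)^(γ-1) * qr m)) atTop atTop := by
      have hlimexp : Tendsto (fun m : ℕ =>
          (Real.sqrt (2*Real.pi))⁻¹ * Real.exp ((γ-γ')*Real.log m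
            - Real.sqrt (2*γ') * Real.sqrt (Real.log m) - 1/2)) atTop atTop := by
        refine Tendsto.const_mul_atTop (by positivity) ?_
        exact Real.tendsto_exp_atTop.comp
          ((lim2 (γ-γ') (Real.sqrt (2*γ')) (by linarith) (Real.sqrt_nonneg _)).comp hLtends)
      refine tendsto_atTop_mono' atTop ?_ hlimexp
      filter_upwards [eventually_ge_atTop 1] with m hm
      have hm0 : (0:ℝ) < m := by exact_mod_cast Nat.lt_of_lt_of_le Nat.zero_lt_one hm
      have hL0 : 0 ≤ Real.log m := Real.log_nonneg (by exact_mod_cast hm)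
      set L : ℝ := Real.log m with hL_def
      set u : ℝ := Real.sqrt (2*γ'*L) with hu_def
      have hu0 : 0 ≤ u := Real.sqrt_nonneg _
      -- qr lower bound
      have hqrlb : (Real.sqrt (2*Real.pi))⁻¹ * Real.exp (-(u+1)^2/2) ≤ qr m := by
        have h := gauss_Ici_ge hu0
        have h2 := ENNReal.toReal_mono (a := ENNReal.ofReal
            ((Real.sqrt (2*Real.pi))⁻¹ * Real.exp (-(u+1)^2/2)))
          (by simp : ((gaussianReal 0 1 : Measure ℝ) (Set.Ici u)) ≠ ⊤) h
        rwa [ENNReal.toReal_ofReal (by positivity)] at h2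
      -- m * π = m^γ = exp (γ L)
      have hmπ : (m:ℝ) * (m:ℝ)^(γ-1) = Real.exp (L * γ) := by
        rw [show (m:ℝ) * (m:ℝ)^(γ-1) = (m:ℝ)^(1:ℝ) * (m:ℝ)^(γ-1) by rw [Real.rpow_one],
          ← Real.rpow_add hm0, show (1:ℝ) + (γ-1) = γ by ring, Real.rpow_def_of_pos hm0]
      have hexpand : -(u+1)^2/2 = -(γ'*L) - u - 1/2 := by
        have : u^2 = 2*γ'*L := Real.sq_sqrt (by positivity)
        nlinarith [this]
      have husplit : u = Real.sqrt (2*γ') * Real.sqrt L := by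
        rw [hu_def, show 2*γ'*L = (2*γ')*L by ring, Real.sqrt_mul (by positivity)]
      calc (Real.sqrt (2*Real.pi))⁻¹ * Real.exp ((γ-γ')*L - Real.sqrt (2*γ') * Real.sqrt L - 1/2)
          = Real.exp (L*γ) * ((Real.sqrt (2*Real.pi))⁻¹ * Real.exp (-(u+1)^2/2)) := by
            have harith : (γ-γ')*L - Real.sqrt (2*γ')*Real.sqrt L - 1/2
                = L*γ + (-(γ'*L) - Real.sqrt (2*γ')*Real.sqrt L - 1/2) := by ring
            rw [hexpand, husplit, mul_left_comm (Real.exp (L*γ)), ← Real.exp_add, harith]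
        _ ≤ Real.exp (L*γ) * qr m :=
            mul_le_mul_of_nonneg_left hqrlb (Real.exp_nonneg _)
        _ = (m:ℝ) * ((m:ℝ)^(γ-1) * qr m) := by rw [← hmπ]; ring
    -- squeeze
    have hub : Tendsto (fun m : ℕ =>
        ENNReal.ofReal (Real.exp (-((m:ℝ) * ((m:ℝ)^(γ-1) * qr m))))) atTop (nhds 0) := by
      have h := ENNReal.tendsto_ofReal (a := 0)
        (Real.tendsto_exp_neg_atTop_nhds_zero.comp hmain)
      simpa using h
    refine tendsto_of_tendsto_of_tendsto_of_le_of_le' tendsto_const_nhds hub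
      (Eventually.of_forall fun m => zero_le) ?_
    filter_upwards [eventually_ge_atTop 1] with m hm
    rw [model_bad2 m (hπ0 m) (hπ1 m hm)]
    have hq_eq : (gaussianReal 0 1 : Measure ℝ) (Set.Ici (Real.sqrt (2*γ'*Real.log m)))
        = ENNReal.ofReal (qr m) := by
      rw [hqr_def, ENNReal.ofReal_toReal (by simp)]
    have hx01 : qr m * (m:ℝ)^(γ-1) ≤ 1 := by
      have := hπ1 m hm
      nlinarith [hqr0 m, hqr1 m, hπ0 m]
    have hx0 : 0 ≤ qr m * (m:ℝ)^(γ-1) := mul_nonneg (hqr0 m) (hπ0 m)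
    calc (1 - (gaussianReal 0 1 : Measure ℝ) (Set.Ici (Real.sqrt (2*γ'*Real.log m)))
          * ENNReal.ofReal ((m:ℝ)^(γ-1))) ^ m
        = ENNReal.ofReal ((1 - qr m * (m:ℝ)^(γ-1))^m) := by
          rw [hq_eq, ← ENNReal.ofReal_mul (hqr0 m), ← ENNReal.ofReal_one,
            ← ENNReal.ofReal_sub _ hx0, ENNReal.ofReal_pow (by linarith)]
      _ ≤ ENNReal.ofReal (Real.exp (-((m:ℝ) * ((m:ℝ)^(γ-1) * qr m)))) := by
          refine ENNReal.ofReal_le_ofReal ?_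
          calc (1 - qr m * (m:ℝ)^(γ-1))^m
              ≤ (Real.exp (-(qr m * (m:ℝ)^(γ-1))))^m := by
                refine pow_le_pow_left₀ (by linarith) ?_ m
                have := Real.add_one_le_exp (-(qr m * (m:ℝ)^(γ-1)))
                linarith
            _ = Real.exp ((m:ℝ) * (-(qr m * (m:ℝ)^(γ-1)))) := (Real.exp_nat_mul _ m).symm
            _ = Real.exp (-((m:ℝ) * ((m:ℝ)^(γ-1) * qr m))) := by ring_nf
  -- deterministic inclusion, eventually
  have hincl : ∀ᶠ m : ℕ in atTop, ∀ ω : (Fin (m + 1) → ℝ) × (Fin m → ℝ),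
      ω ∉ {ω : (Fin (m + 1) → ℝ) × (Fin m → ℝ) | ω.1 0 < -(ε * Real.sqrt (2*Real.log m))} →
      ω ∉ {ω : (Fin (m + 1) → ℝ) × (Fin m → ℝ) | ∀ i : Fin m,
        ¬(ω.2 i = 1 ∧ Real.sqrt (2*γ'*Real.log m) ≤ ω.1 i.succ)} →
      ω ∈ {ω : (Fin (m + 1) → ℝ) × (Fin m → ℝ) | ((1 / m : ℝ) * ∑ i : Fin m,
            pval m (Real.sqrt (2 * c * Real.log m)) ρ ω i ^ r) ^ (1 / r) ≤ cal r α m} := by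
    have hev : ∀ᶠ m : ℕ in atTop,
        (1 + α * Real.log m) * Real.exp (-((δ^2-1) * Real.log m)) < α := by
      refine Tendsto.eventually_lt_const hα ?_
      exact (lim1 α (δ^2-1) (by linarith)).comp hLtends
    filter_upwards [eventually_ge_atTop 1, hev] with m hm hevm ω hω1 hω2
    have hm0 : (0:ℝ) < m := by exact_mod_cast Nat.lt_of_lt_of_le Nat.zero_lt_one hm
    have hL0 : 0 ≤ Real.log m := Real.log_nonneg (by exact_mod_cast hm)
    set L : ℝ := Real.log m with hL_def
    have hL1 : (0:ℝ) < 1 + α * L := by nlinarith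
    -- the threshold inequality
    have hw_eq : Real.sqrt (2*c*L) - Real.sqrt ρ * (ε * Real.sqrt (2*L))
        + Real.sqrt (1-ρ) * Real.sqrt (2*γ'*L) = δ * Real.sqrt (2*L) := by
      have h1 : Real.sqrt (2*c*L) = Real.sqrt c * Real.sqrt (2*L) := by
        rw [show 2*c*L = c*(2*L) by ring, Real.sqrt_mul hc.le]
      have h2 : Real.sqrt (1-ρ) * Real.sqrt (2*γ'*L)
          = Real.sqrt ((1-ρ)*γ') * Real.sqrt (2*L) := by
        rw [← Real.sqrt_mul (by linarith) (2*γ'*L),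
          ← Real.sqrt_mul (mul_nonneg (by linarith : (0:ℝ) ≤ 1-ρ) hγ'0.le) (2*L),
          show (1-ρ)*(2*γ'*L) = (1-ρ)*γ'*(2*L) by ring]
      rw [h1, h2, hδ_def]
      ring
    have hT : Phi (-(Real.sqrt (2*c*L) - Real.sqrt ρ * (ε * Real.sqrt (2*L))
        + Real.sqrt (1-ρ) * Real.sqrt (2*γ'*L))) ≤ α / (m * (1 + α * L)) := by
      rw [hw_eq]
      have hw0 : 0 ≤ δ * Real.sqrt (2*L) := by positivity
      refine le_trans (Phi_le_exp hw0) ?_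
      have hsq2 : (δ * Real.sqrt (2*L))^2 = δ^2 * (2*L) := by
        rw [mul_pow, Real.sq_sqrt (by linarith)]
      rw [le_div_iff₀ (mul_pos hm0 hL1)]
      have hmexp : (m:ℝ) = Real.exp L := (Real.exp_log hm0).symm
      calc Real.exp (-(δ * Real.sqrt (2*L))^2/2) * ((m:ℝ) * (1 + α*L))
          = (1 + α*L) * (Real.exp L * Real.exp (-(δ^2*L))) := by
            rw [hsq2, hmexp]; ring_nf
        _ = (1 + α*L) * Real.exp (-((δ^2-1)*L)) := by rw [← Real.exp_add]; ring_nf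
        _ ≤ α := le_of_lt hevm
    -- apply the deterministic lemma
    simp only [Set.mem_setOf_eq, not_lt] at hω1
    simp only [Set.mem_setOf_eq, not_forall, not_not] at hω2
    obtain ⟨i, hi⟩ := hω2
    exact det_lemma r α hr hα m hm (Real.sqrt (2*c*L)) ρ
      (Real.sqrt (2*γ'*L)) (ε * Real.sqrt (2*L)) (Real.sqrt_nonneg _) hT ω hω1 ⟨i, hi⟩
  -- assemble
  have hlo : ∀ᶠ m : ℕ in atTop,
      1 - (model m ((m:ℝ)^(γ-1)) {ω : (Fin (m + 1) → ℝ) × (Fin m → ℝ) |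
            ω.1 0 < -(ε * Real.sqrt (2*Real.log m))}
        + model m ((m:ℝ)^(γ-1)) {ω : (Fin (m + 1) → ℝ) × (Fin m → ℝ) | ∀ i : Fin m,
            ¬(ω.2 i = 1 ∧ Real.sqrt (2*γ'*Real.log m) ≤ ω.1 i.succ)})
      ≤ model m ((m:ℝ)^(γ-1)) {ω : (Fin (m + 1) → ℝ) × (Fin m → ℝ) |
          ((1 / m : ℝ) * ∑ i : Fin m,
            pval m (Real.sqrt (2 * c * Real.log m)) ρ ω i ^ r) ^ (1 / r) ≤ cal r α m} := by
    filter_upwards [eventually_ge_atTop 1, hincl] with m hm hinclm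
    haveI : IsProbabilityMeasure (bern ((m:ℝ)^(γ-1))) := bern_prob (hπ0 m) (hπ1 m hm)
    haveI : IsProbabilityMeasure (model m ((m:ℝ)^(γ-1))) := by
      unfold model; infer_instance
    rw [tsub_le_iff_right]
    calc (1:ℝ≥0∞) = model m ((m:ℝ)^(γ-1)) Set.univ := measure_univ.symm
      _ ≤ model m ((m:ℝ)^(γ-1)) ({ω : (Fin (m + 1) → ℝ) × (Fin m → ℝ) |
          ((1 / m : ℝ) * ∑ i : Fin m,
            pval m (Real.sqrt (2 * c * Real.log m)) ρ ω i ^ r) ^ (1 / r) ≤ cal r α m}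
          ∪ ({ω : (Fin (m + 1) → ℝ) × (Fin m → ℝ) | ω.1 0 < -(ε * Real.sqrt (2*Real.log m))}
            ∪ {ω : (Fin (m + 1) → ℝ) × (Fin m → ℝ) | ∀ i : Fin m,
              ¬(ω.2 i = 1 ∧ Real.sqrt (2*γ'*Real.log m) ≤ ω.1 i.succ)})) := by
          refine measure_mono fun ω _ => ?_
          by_cases h1 : ω ∈ {ω : (Fin (m + 1) → ℝ) × (Fin m → ℝ) |
              ω.1 0 < -(ε * Real.sqrt (2*Real.log m))}
          · exact Or.inr (Or.inl h1)
          by_cases h2 : ω ∈ {ω : (Fin (m + 1) → ℝ) × (Fin m → ℝ) | ∀ i : Fin m,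
              ¬(ω.2 i = 1 ∧ Real.sqrt (2*γ'*Real.log m) ≤ ω.1 i.succ)}
          · exact Or.inr (Or.inr h2)
          · exact Or.inl (hinclm ω h1 h2)
      _ ≤ model m ((m:ℝ)^(γ-1)) {ω : (Fin (m + 1) → ℝ) × (Fin m → ℝ) |
          ((1 / m : ℝ) * ∑ i : Fin m,
            pval m (Real.sqrt (2 * c * Real.log m)) ρ ω i ^ r) ^ (1 / r) ≤ cal r α m}
          + model m ((m:ℝ)^(γ-1)) ({ω : (Fin (m + 1) → ℝ) × (Fin m → ℝ) |
              ω.1 0 < -(ε * Real.sqrt (2*Real.log m))}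
            ∪ {ω : (Fin (m + 1) → ℝ) × (Fin m → ℝ) | ∀ i : Fin m,
              ¬(ω.2 i = 1 ∧ Real.sqrt (2*γ'*Real.log m) ≤ ω.1 i.succ)}) :=
          measure_union_le _ _
      _ ≤ _ := add_le_add le_rfl (measure_union_le _ _)
  have hup : ∀ᶠ m : ℕ in atTop,
      model m ((m:ℝ)^(γ-1)) {ω : (Fin (m + 1) → ℝ) × (Fin m → ℝ) |
          ((1 / m : ℝ) * ∑ i : Fin m,
            pval m (Real.sqrt (2 * c * Real.log m)) ρ ω i ^ r) ^ (1 / r) ≤ cal r α m}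
        ≤ 1 := by
    filter_upwards [eventually_ge_atTop 1] with m hm
    haveI : IsProbabilityMeasure (bern ((m:ℝ)^(γ-1))) := bern_prob (hπ0 m) (hπ1 m hm)
    haveI : IsProbabilityMeasure (model m ((m:ℝ)^(γ-1))) := by
      unfold model; infer_instance
    exact prob_le_one
  have hlim : Tendsto (fun m : ℕ =>
      (1:ℝ≥0∞) - (model m ((m:ℝ)^(γ-1)) {ω : (Fin (m + 1) → ℝ) × (Fin m → ℝ) |
            ω.1 0 < -(ε * Real.sqrt (2*Real.log m))}
        + model m ((m:ℝ)^(γ-1)) {ω : (Fin (m + 1) → ℝ) × (Fin m → ℝ) | ∀ i : Fin m,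
            ¬(ω.2 i = 1 ∧ Real.sqrt (2*γ'*Real.log m) ≤ ω.1 i.succ)}))
      atTop (nhds 1) := by
    have hsum := hb1.add hb2
    rw [add_zero] at hsum
    have hone : Tendsto (fun _ : ℕ => (1:ℝ≥0∞)) atTop (nhds 1) := tendsto_const_nhds
    have := ENNReal.Tendsto.sub hone hsum (Or.inl ENNReal.one_ne_top)
    simpa using this
  exact tendsto_of_tendsto_of_tendsto_of_le_of_le' hlim tendsto_const_nhds hlo hup
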